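/- arXiv:2505.22464 — 3 statements merged into one kernel-verified Lean document; each statement's English description precedes it below -/
import Mathlib

section
/- The map (g, f) ↦ f ∘ g⁻¹ from Aff(n,ℝ) × Conv(ℝⁿ,ℝ) to Conv(ℝⁿ,ℝ) is continuous, where Aff(n,ℝ) is the group of invertible affine transformations of ℝⁿ and Conv(ℝⁿ,ℝ) carries the topology of locally uniform convergence. -/
/-- The space `Conv(ℝⁿ,ℝ)` of finite-valued convex functions on `ℝⁿ`, with the topology of
locally uniform (= compact-open) convergence. -/
def ConvFun (n : ℕ) : Type :=
  {f : C(EuclideanSpace ℝ (Fin n), ℝ) // ConvexOn ℝ Set.univ f}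

noncomputable instance (n : ℕ) : TopologicalSpace (ConvFun n) :=
  instTopologicalSpaceSubtype

/-- The group `Aff(n,ℝ)` of invertible affine transformations of `ℝⁿ`, realized as pairs
`(g, g⁻¹)` of (automatically continuous) affine self-maps of `ℝⁿ` that are mutually inverse,
topologized as a subset of the space of (continuous) affine maps `ℝⁿ → ℝⁿ`. -/
def AffGrp (n : ℕ) : Type :=
  {p : (EuclideanSpace ℝ (Fin n) →ᴬ[ℝ] EuclideanSpace ℝ (Fin n)) ×
       (EuclideanSpace ℝ (Fin n) →ᴬ[ℝ] EuclideanSpace ℝ (Fin n)) //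
    (∀ x, p.1 (p.2 x) = x) ∧ ∀ x, p.2 (p.1 x) = x}

noncomputable instance (n : ℕ) : TopologicalSpace (AffGrp n) :=
  instTopologicalSpaceSubtype

lemma convexOn_comp_affine {n : ℕ} {f : EuclideanSpace ℝ (Fin n) → ℝ}
    (hf : ConvexOn ℝ Set.univ f)
    (g : EuclideanSpace ℝ (Fin n) →ᵃ[ℝ] EuclideanSpace ℝ (Fin n)) :
    ConvexOn ℝ Set.univ (fun x => f (g x)) := by
  simpa [Function.comp_def] using hf.comp_affineMap g


section aux
variable {𝕜 V W : Type*} [NontriviallyNormedField 𝕜]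
  [NormedAddCommGroup V] [NormedSpace 𝕜 V] [NormedAddCommGroup W] [NormedSpace 𝕜 W]

lemma aff_continuous_contLinear :
    Continuous fun g : V →ᴬ[𝕜] W => g.contLinear := by
  apply LipschitzWith.continuous (K := 1)
  apply LipschitzWith.of_dist_le_mul
  intro g g'
  rw [dist_eq_norm, dist_eq_norm, NNReal.coe_one, one_mul,
    show g.contLinear - g'.contLinear = (g - g').contLinear from
      (ContinuousAffineMap.sub_contLinear g g').symm]
  exact ContinuousAffineMap.norm_contLinear_le _

lemma aff_continuous_apply_zero :
    Continuous fun g : V →ᴬ[𝕜] W => g 0 := by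
  apply LipschitzWith.continuous (K := 1)
  apply LipschitzWith.of_dist_le_mul
  intro g g'
  rw [dist_eq_norm, dist_eq_norm, NNReal.coe_one, one_mul,
    show g 0 - g' 0 = (g - g') 0 from by simp, ContinuousAffineMap.norm_def]
  exact le_max_left _ _

lemma aff_apply_eq (g : V →ᴬ[𝕜] W) (x : V) : g x = g.contLinear x + g 0 := by
  conv_lhs => rw [show (g : V → W) x = (g.contLinear + Function.const V (g 0)) x from by
    rw [← ContinuousAffineMap.decomp]]
  rfl

lemma aff_continuous_eval :
    Continuous fun p : (V →ᴬ[𝕜] W) × V => p.1 p.2 := by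
  have h1 : Continuous fun p : (V →ᴬ[𝕜] W) × V => p.1.contLinear p.2 :=
    isBoundedBilinearMap_apply.continuous.comp
      ((aff_continuous_contLinear.comp continuous_fst).prodMk continuous_snd)
  have h2 : Continuous fun p : (V →ᴬ[𝕜] W) × V => p.1 0 :=
    aff_continuous_apply_zero.comp continuous_fst
  exact (h1.add h2).congr fun p => (aff_apply_eq p.1 p.2).symm

lemma aff_continuous_toContinuousMap :
    Continuous fun g : V →ᴬ[𝕜] W => (g : C(V, W)) :=
  ContinuousMap.continuous_of_continuous_uncurry _ aff_continuous_eval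
end aux

/-- the action map `(g, f) ↦ f ∘ g⁻¹` of `Aff(n,ℝ)` on `Conv(ℝⁿ,ℝ)` is
continuous. -/
theorem statement2 (n : ℕ) :
    Continuous (fun p : AffGrp n × ConvFun n =>
      (⟨⟨fun x => p.2.1 (p.1.1.2 x),
          (p.2.1.continuous.comp p.1.1.2.continuous)⟩,
        convexOn_comp_affine p.2.2 p.1.1.2.toAffineMap⟩ : ConvFun n)) := by
  apply Continuous.subtype_mk
  have hc : Continuous fun p : AffGrp n × ConvFun n =>
      (p.2.1.comp (p.1.1.2 : C(EuclideanSpace ℝ (Fin n), EuclideanSpace ℝ (Fin n)))) :=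
    ContinuousMap.continuous_comp'.comp
      ((aff_continuous_toContinuousMap.comp
        ((continuous_subtype_val.comp continuous_fst).snd)).prodMk
        (continuous_subtype_val.comp continuous_snd))
  convert hc using 2
  rfl
end

section
/- Let α ∈ ℕⁿ, F entire on ℂⁿ, and let g_α be the unique entire function such that no monomial in the power series expansion of F − g_α z^α is divisible by z^α. Then for every δ > 0 and every z ∈ ℂⁿ, |g_α(z)| ≤ (2ⁿ/δ^{|α|}) · ∏_{j=1}^n ((|z_j|+δ)/δ) · sup{|F(ξ)| : |Re ξ_j| ≤ |Re z_j|+δ, |Im ξ_j| ≤ |Im z_j|+δ, 1≤j≤n}. -/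
open Finset
open scoped Nat Real

set_option maxHeartbeats 1600000

open Finset
open scoped Nat

/-- An entire function has entire derivative. -/
lemma entire_deriv {f : ℂ → ℂ} (hf : Differentiable ℂ f) : Differentiable ℂ (deriv f) := by
  have h : AnalyticOnNhd ℂ f Set.univ := fun x _ => hf.analyticAt x
  exact fun x => ((h.deriv) x trivial).differentiableAt

/-- Taylor remainder bound for entire functions along a segment. -/
lemma taylor_bound : ∀ (α : ℕ) (f : ℂ → ℂ), Differentiable ℂ f → ∀ (z : ℂ) (D : ℝ),
    (∀ t : ℝ, t ∈ Set.Icc (0:ℝ) 1 → ‖iteratedDeriv α f (t • z)‖ ≤ D) →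
    ‖f z - ∑ k ∈ Finset.range α, (k ! : ℂ)⁻¹ * iteratedDeriv k f 0 * z ^ k‖
      ≤ D * ‖z‖ ^ α / (α !) := by
  intro α
  induction α with
  | zero =>
    intro f hf z D hD
    simpa using hD 1 (by norm_num)
  | succ α ih =>
    intro f hf z D hD
    have hf' : Differentiable ℂ (deriv f) := entire_deriv hf
    set c : ℕ → ℂ := fun k => (k ! : ℂ)⁻¹ * iteratedDeriv k f 0 with hc
    set R₁ : ℂ → ℂ := fun w =>
      deriv f w - ∑ k ∈ Finset.range α, (k ! : ℂ)⁻¹ * iteratedDeriv k (deriv f) 0 * w ^ k with hR₁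
    set phi : ℝ → ℂ := fun s => f (s • z) - ∑ k ∈ Finset.range (α+1), c k * (s • z) ^ k with hphi
    -- derivative of phi
    have hderiv : ∀ s : ℝ, HasDerivAt phi (z * R₁ (s • z)) s := by
      intro s
      have hsz : HasDerivAt (fun s : ℝ => s • z) z s := by
        simpa using (hasDerivAt_id s).smul_const z
      have h1 : HasDerivAt (fun s : ℝ => f (s • z)) (z * deriv f (s • z)) s := by
        have := (hf.differentiableAt.hasDerivAt (x := s • z)).scomp s hsz
        simpa [smul_eq_mul, mul_comm, Function.comp_def] using this
      have h2 : ∀ k : ℕ, HasDerivAt (fun s : ℝ => c k * (s • z) ^ k)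
          (z * (c k * (k * (s • z) ^ (k-1)))) s := by
        intro k
        have hp : HasDerivAt (fun w : ℂ => c k * w ^ k) (c k * (k * (s • z) ^ (k-1))) (s • z) :=
          (hasDerivAt_pow k (s • z)).const_mul (c k)
        have := hp.scomp s hsz
        simpa [smul_eq_mul, mul_comm, mul_left_comm, Function.comp_def] using this
      have hsum : HasDerivAt (fun s : ℝ => ∑ k ∈ Finset.range (α+1), c k * (s • z) ^ k)
          (∑ k ∈ Finset.range (α+1), z * (c k * (k * (s • z) ^ (k-1)))) s :=
        HasDerivAt.fun_sum (fun k _ => h2 k)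
      have key : ∑ k ∈ Finset.range (α+1), z * (c k * (k * (s • z) ^ (k-1)))
          = z * ∑ k ∈ Finset.range α, (k ! : ℂ)⁻¹ * iteratedDeriv k (deriv f) 0 * (s • z) ^ k := by
        rw [Finset.sum_range_succ']
        simp only [Nat.cast_zero, zero_mul, mul_zero, add_zero, Nat.succ_sub_one]
        rw [Finset.mul_sum]
        refine Finset.sum_congr rfl fun k _ => ?_
        have hID : iteratedDeriv k (deriv f) 0 = iteratedDeriv (k+1) f 0 := by
          rw [iteratedDeriv_succ']
        have hne : ((k:ℂ)+1) ≠ 0 := Nat.cast_add_one_ne_zero k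
        have hne2 : ((k ! : ℕ) : ℂ) ≠ 0 := Nat.cast_ne_zero.2 (Nat.factorial_ne_zero k)
        have hfac : (((k+1)! : ℕ) : ℂ) = ((k:ℂ)+1) * ((k ! : ℕ) : ℂ) := by
          rw [Nat.factorial_succ]; push_cast; ring
        rw [hID, hc]
        simp only [Nat.add_sub_cancel]
        rw [hfac]
        push_cast
        field_simp
      have := h1.fun_sub hsum
      rw [key] at this
      simpa [hR₁, mul_sub, hphi] using this
    -- continuity of integrand
    have hcR : Continuous R₁ := by
      rw [hR₁]
      exact hf'.continuous.sub (continuous_finset_sum _ fun k _ =>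
        (continuous_const.mul (continuous_pow k)))
    have hcont : Continuous fun s : ℝ => z * R₁ (s • z) :=
      continuous_const.mul (hcR.comp (continuous_id.smul continuous_const))
    have hint : IntervalIntegrable (fun s => z * R₁ (s • z)) MeasureTheory.volume 0 1 :=
      hcont.intervalIntegrable 0 1
    have hFTC : ∫ s in (0:ℝ)..1, z * R₁ (s • z) = phi 1 - phi 0 :=
      intervalIntegral.integral_eq_sub_of_hasDerivAt (fun s _ => hderiv s) hint
    have hphi0 : phi 0 = 0 := by
      have hz : ∑ k ∈ Finset.range (α+1), c k * (0:ℂ) ^ k = c 0 := by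
        rw [Finset.sum_eq_single 0]
        · simp
        · intro b _ hb; simp [zero_pow hb]
        · simp
      simp only [hphi, zero_smul, hz, hc, iteratedDeriv_zero]
      rw [Finset.sum_eq_single 0]
      · simp
      · intro b _ hb; simp [zero_pow hb]
      · simp
    set B : ℝ := ‖z‖ ^ (α+1) * D / α ! with hB
    have hbound : ∀ s ∈ Set.Icc (0:ℝ) 1, ‖z * R₁ (s • z)‖ ≤ B * s ^ α := by
      intro s hs
      have hIH : ‖R₁ (s • z)‖ ≤ D * ‖s • z‖ ^ α / α ! := by
        refine ih (deriv f) hf' (s • z) D ?_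
        intro t ht
        have h1 : t • s • z = (t * s) • z := (smul_smul t s z)
        have h2 : iteratedDeriv α (deriv f) = iteratedDeriv (α+1) f :=
          (iteratedDeriv_succ').symm
        rw [h1, h2]
        refine hD (t * s) ⟨mul_nonneg ht.1 hs.1, ?_⟩
        calc t * s ≤ 1 * 1 := mul_le_mul ht.2 hs.2 hs.1 zero_le_one
        _ = 1 := by norm_num
      have hnorm : ‖s • z‖ = s * ‖z‖ := by
        rw [norm_smul, Real.norm_eq_abs, abs_of_nonneg hs.1]
      rw [norm_mul]
      calc ‖z‖ * ‖R₁ (s • z)‖ ≤ ‖z‖ * (D * ‖s • z‖ ^ α / α !) :=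
            mul_le_mul_of_nonneg_left hIH (norm_nonneg z)
        _ = B * s ^ α := by
            rw [hnorm, mul_pow, hB]
            rw [pow_succ]
            field_simp
    have hphi1 : ‖phi 1‖ ≤ B * (1 / (α + 1)) := by
      have h1 : phi 1 = ∫ s in (0:ℝ)..1, z * R₁ (s • z) := by rw [hFTC, hphi0]; ring
      rw [h1]
      calc ‖∫ s in (0:ℝ)..1, z * R₁ (s • z)‖
          ≤ ∫ s in (0:ℝ)..1, ‖z * R₁ (s • z)‖ :=
            intervalIntegral.norm_integral_le_integral_norm zero_le_one
        _ ≤ ∫ s in (0:ℝ)..1, B * s ^ α := by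
            refine intervalIntegral.integral_mono_on zero_le_one
              (hcont.norm.intervalIntegrable 0 1)
              ((continuous_const.mul (continuous_pow α)).intervalIntegrable 0 1) hbound
        _ = B * (1 / (α + 1)) := by
            rw [intervalIntegral.integral_const_mul, integral_pow]
            norm_num
    have hout : phi 1 = f z - ∑ k ∈ Finset.range (α+1), (k ! : ℂ)⁻¹ * iteratedDeriv k f 0 * z ^ k := by
      simp [hphi, hc]
    rw [← hout]
    refine hphi1.trans (le_of_eq ?_)
    rw [hB, Nat.factorial_succ]
    have hfa : (0:ℝ) < α ! := by exact_mod_cast Nat.factorial_pos α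
    push_cast
    field_simp

open scoped Nat Real

lemma cauchy_bound (f : ℂ → ℂ) (hf : Differentiable ℂ f) (α : ℕ) (w : ℂ) (δ : ℝ)
    (hδ : 0 < δ) (C : ℝ) (hC : ∀ ξ : ℂ, dist ξ w ≤ δ → ‖f ξ‖ ≤ C) :
    ‖iteratedDeriv α f w‖ ≤ α ! * C / δ ^ α := by
  lift δ to NNReal using hδ.le with δ' hδ'
  have hδ0 : 0 < δ' := by exact_mod_cast hδ
  have h := hf.hasFPowerSeriesOnBall w hδ0
  have hkey : (α ! : ℂ) * (cauchyPowerSeries f w δ' α fun _ => (1:ℂ)) = iteratedDeriv α f w := by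
    have := h.factorial_smul (1:ℂ) α
    rw [iteratedDeriv_eq_iteratedFDeriv]
    rw [← this]
    simp [nsmul_eq_mul]
  have hC0 : 0 ≤ C := le_trans (norm_nonneg _) (hC w (by simp [hδ.le]))
  have hIle : (∫ θ : ℝ in (0)..2 * π, ‖f (circleMap w δ' θ)‖) ≤ 2 * π * C := by
    have : ∀ θ ∈ Set.Icc (0:ℝ) (2*π), ‖f (circleMap w δ' θ)‖ ≤ C := by
      intro θ _
      refine hC _ ?_
      have := circleMap_mem_sphere w (NNReal.coe_nonneg δ') θ
      rw [mem_sphere_iff_norm] at this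
      rw [dist_eq_norm]
      rw [this]
    calc (∫ θ : ℝ in (0)..2 * π, ‖f (circleMap w δ' θ)‖) ≤ ∫ θ : ℝ in (0)..2 * π, C := by
          refine intervalIntegral.integral_mono_on (by positivity)
            ((hf.continuous.comp (continuous_circleMap _ _)).norm.intervalIntegrable 0 _)
            (intervalIntegrable_const) this
      _ = 2 * π * C := by simp [mul_comm]
  have hq : ‖cauchyPowerSeries f w δ' α fun _ => (1:ℂ)‖ ≤ C * (δ'⁻¹:ℝ) ^ α := by
    calc ‖cauchyPowerSeries f w δ' α fun _ => (1:ℂ)‖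
        ≤ ‖cauchyPowerSeries f w δ' α‖ * ∏ _i : Fin α, ‖(1:ℂ)‖ :=
          (cauchyPowerSeries f w δ' α).le_opNorm _
      _ = ‖cauchyPowerSeries f w δ' α‖ := by simp
      _ ≤ ((2 * π)⁻¹ * ∫ θ : ℝ in (0)..2 * π, ‖f (circleMap w δ' θ)‖) * |(δ':ℝ)|⁻¹ ^ α :=
          norm_cauchyPowerSeries_le f w δ' α
      _ ≤ ((2 * π)⁻¹ * (2 * π * C)) * |(δ':ℝ)|⁻¹ ^ α := by
          have h2π : (0:ℝ) < 2 * π := Real.two_pi_pos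
          gcongr
      _ = C * (δ'⁻¹:ℝ) ^ α := by
          rw [abs_of_nonneg (NNReal.coe_nonneg δ')]
          field_simp
  calc ‖iteratedDeriv α f w‖ = (α !) * ‖cauchyPowerSeries f w δ' α fun _ => (1:ℂ)‖ := by
        rw [← hkey, norm_mul]
        simp
    _ ≤ (α !) * (C * (δ'⁻¹:ℝ) ^ α) := by
        exact mul_le_mul_of_nonneg_left hq (by positivity)
    _ = α ! * C / (δ':ℝ) ^ α := by
        rw [inv_pow]
        ring

/-- One-variable key estimate. -/
lemma lemA (a : ℕ → ℂ) (ha : ∀ w : ℂ, Summable fun k => a k * w ^ k)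
    (α : ℕ) (z : ℂ) (δ : ℝ) (hδ : 0 < δ) (C : ℝ)
    (hC : ∀ (t : ℝ) (w : ℂ), t ∈ Set.Icc (0:ℝ) 1 → dist w (t • z) ≤ δ →
      ‖∑' k, a k * w ^ k‖ ≤ C) :
    ‖∑' k, a (k + α) * z ^ k‖ ≤ C / δ ^ α := by
  classical
  set p : FormalMultilinearSeries ℂ ℂ ℂ := FormalMultilinearSeries.ofScalars ℂ a with hp
  have hpnorm : ∀ n, ‖p n‖ = ‖a n‖ := fun n => FormalMultilinearSeries.ofScalars_norm ℂ a n
  have hrad : p.radius = ⊤ := by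
    refine p.radius_eq_top_of_summable_norm (fun r => ?_)
    have h1 : Summable fun k => ‖a k * ((r:ℝ):ℂ) ^ k‖ := summable_norm_iff.2 (ha _)
    refine h1.congr fun k => ?_
    rw [hpnorm, norm_mul, norm_pow, Complex.norm_real]
    simp [Real.norm_eq_abs, abs_of_nonneg r.coe_nonneg]
  set f : ℂ → ℂ := fun w => ∑' k, a k * w ^ k with hfdef
  have hsum_eq : f = p.sum := by
    funext w
    rw [hfdef, FormalMultilinearSeries.sum]
    exact tsum_congr fun k => by
      rw [hp, FormalMultilinearSeries.ofScalars_apply_eq]; simp [smul_eq_mul]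
  have hfp : HasFPowerSeriesOnBall f p 0 ⊤ := by
    rw [hsum_eq, ← hrad]
    exact p.hasFPowerSeriesOnBall (by rw [hrad]; exact ENNReal.zero_lt_top)
  have hdf : Differentiable ℂ f := fun x =>
    (hfp.analyticAt_of_mem (by simp)).differentiableAt
  have hak : ∀ k : ℕ, a k = (k ! : ℂ)⁻¹ * iteratedDeriv k f 0 := by
    intro k
    have h1 := hfp.factorial_smul (1:ℂ) k
    have h2 : (p k fun _ => (1:ℂ)) = a k := by
      rw [hp, FormalMultilinearSeries.ofScalars_apply_eq]; simp
    rw [h2, ← iteratedDeriv_eq_iteratedFDeriv, nsmul_eq_mul] at h1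
    have hfk : ((k ! : ℕ) : ℂ) ≠ 0 := Nat.cast_ne_zero.2 (Nat.factorial_ne_zero k)
    field_simp [← h1]
    linear_combination h1
  have hCauchy : ∀ t : ℝ, t ∈ Set.Icc (0:ℝ) 1 → ‖iteratedDeriv α f (t • z)‖ ≤ α ! * C / δ ^ α :=
    fun t ht => cauchy_bound f hdf α (t • z) δ hδ C (fun ξ hξ => hC t ξ ht hξ)
  have hC0 : 0 ≤ C := le_trans (norm_nonneg _) (hC 1 z (by norm_num) (by simp [hδ.le]))
  by_cases hz : z = 0
  · subst hz
    have : (∑' k, a (k + α) * (0:ℂ) ^ k) = a α := by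
      rw [tsum_eq_single 0]
      · simp
      · intro b hb; simp [zero_pow hb]
    rw [this, hak α]
    rw [norm_mul, norm_inv, Complex.norm_natCast]
    have h1 : ‖iteratedDeriv α f 0‖ ≤ α ! * C / δ ^ α := by
      have := hCauchy 0 (by norm_num)
      simpa using this
    have hfa : (0:ℝ) < α ! := by exact_mod_cast Nat.factorial_pos α
    calc ((α ! : ℝ))⁻¹ * ‖iteratedDeriv α f 0‖ ≤ (α ! : ℝ)⁻¹ * (α ! * C / δ ^ α) := by
          exact mul_le_mul_of_nonneg_left h1 (by positivity)
      _ = C / δ ^ α := by field_simp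
  · -- z ≠ 0 : Taylor remainder
    have htay : ‖f z - ∑ k ∈ Finset.range α, a k * z ^ k‖ ≤ C * ‖z‖ ^ α / δ ^ α := by
      have h := taylor_bound α f hdf z (α ! * C / δ ^ α) hCauchy
      have hsum : ∑ k ∈ Finset.range α, (k ! : ℂ)⁻¹ * iteratedDeriv k f 0 * z ^ k
          = ∑ k ∈ Finset.range α, a k * z ^ k :=
        Finset.sum_congr rfl fun k _ => by rw [← hak k]
      rw [hsum] at h
      refine h.trans (le_of_eq ?_)
      have hfa : (0:ℝ) < α ! := by exact_mod_cast Nat.factorial_pos α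
      field_simp
    -- series splitting
    have hs1 : HasSum (fun k => a k * z ^ k) (f z) := (ha z).hasSum
    have hs2 : HasSum (fun k => a (k + α) * z ^ (k + α))
        (f z - ∑ k ∈ Finset.range α, a k * z ^ k) := by
      rw [hasSum_nat_add_iff (f := fun k => a k * z ^ k) α]
      simpa using hs1
    have hs3 : HasSum (fun k => a (k + α) * z ^ k)
        ((z ^ α)⁻¹ * (f z - ∑ k ∈ Finset.range α, a k * z ^ k)) := by
      have hzα : (z ^ α) ≠ 0 := pow_ne_zero α hz
      have h4 : HasSum (fun k => (z ^ α)⁻¹ * (a (k + α) * z ^ (k + α)))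
          ((z ^ α)⁻¹ * (f z - ∑ k ∈ Finset.range α, a k * z ^ k)) := hs2.mul_left _
      refine h4.congr_fun fun k => ?_
      rw [pow_add]
      field_simp
    rw [hs3.tsum_eq, norm_mul, norm_inv, norm_pow]
    have hzpos : (0:ℝ) < ‖z‖ ^ α := pow_pos (norm_pos_iff.2 hz) α
    calc (‖z‖ ^ α)⁻¹ * ‖f z - ∑ k ∈ Finset.range α, a k * z ^ k‖
        ≤ (‖z‖ ^ α)⁻¹ * (C * ‖z‖ ^ α / δ ^ α) := mul_le_mul_of_nonneg_left htay (by positivity)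
      _ = C / δ ^ α := by
          have he : C * ‖z‖ ^ α / δ ^ α = ‖z‖ ^ α * (C / δ ^ α) := by ring
          rw [he, ← mul_assoc, inv_mul_cancel₀ hzpos.ne', one_mul]

section helpers
variable {n : ℕ}

lemma cons_add_cons (x y : ℕ) (X Y : Fin n → ℕ) :
    (Fin.cons x X : Fin (n+1) → ℕ) + (Fin.cons y Y : Fin (n+1) → ℕ)
      = (Fin.cons (x + y) (X + Y) : Fin (n+1) → ℕ) := by
  funext i
  refine Fin.cases ?_ (fun j => ?_) i <;> simp

lemma prod_cons_pow {M : Type*} [CommMonoid M] (x : M) (X : Fin n → M) (k : ℕ) (K : Fin n → ℕ) :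
    ∏ j : Fin (n+1), (Fin.cons x X j) ^ (Fin.cons k K j) = x ^ k * ∏ j, X j ^ K j := by
  rw [Fin.prod_univ_succ]
  simp

/-- summability of shifted coefficient families. -/
lemma shift_summable (a : (Fin n → ℕ) → ℂ)
    (ha : ∀ z : Fin n → ℂ, Summable fun β : Fin n → ℕ => ‖a β‖ * ∏ j, ‖z j‖ ^ β j)
    (θ : Fin n → ℕ) (ξ : Fin n → ℂ) :
    Summable fun γ : Fin n → ℕ => ‖a (γ + θ)‖ * ∏ j, ‖ξ j‖ ^ γ j := by
  have hR := ha (fun j => ((max ‖ξ j‖ 1 : ℝ) : ℂ))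
  have hRnorm : ∀ j, ‖((max ‖ξ j‖ 1 : ℝ) : ℂ)‖ = max ‖ξ j‖ 1 := fun j => by
    rw [Complex.norm_real, Real.norm_eq_abs, abs_of_nonneg (le_max_of_le_right zero_le_one)]
  refine Summable.of_nonneg_of_le (fun γ => by positivity) (fun γ => ?_)
    (hR.comp_injective (add_left_injective θ))
  show ‖a (γ + θ)‖ * ∏ j, ‖ξ j‖ ^ γ j ≤ ‖a (γ + θ)‖ * ∏ j, ‖((max ‖ξ j‖ 1 : ℝ) : ℂ)‖ ^ ((γ + θ) j)
  refine mul_le_mul_of_nonneg_left ?_ (norm_nonneg _)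
  refine Finset.prod_le_prod (fun j _ => by positivity) (fun j _ => ?_)
  rw [hRnorm j]
  calc ‖ξ j‖ ^ γ j ≤ (max ‖ξ j‖ 1) ^ γ j :=
        pow_le_pow_left₀ (norm_nonneg _) (le_max_left _ _) _
    _ ≤ (max ‖ξ j‖ 1) ^ ((γ + θ) j) :=
        pow_le_pow_right₀ (le_max_right _ _) (by simp [Pi.add_apply])

end helpers

lemma lemB : ∀ (n : ℕ) (a : (Fin n → ℕ) → ℂ),
    (∀ z : Fin n → ℂ, Summable fun β : Fin n → ℕ => ‖a β‖ * ∏ j, ‖z j‖ ^ β j) →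
    ∀ (α : Fin n → ℕ) (z : Fin n → ℂ) (δ : ℝ), 0 < δ → ∀ C : ℝ,
    (∀ ξ : Fin n → ℂ, (∀ j, ∃ t : ℝ, t ∈ Set.Icc (0:ℝ) 1 ∧ dist (ξ j) (t • z j) ≤ δ) →
      ‖∑' β : Fin n → ℕ, a β * ∏ j, ξ j ^ β j‖ ≤ C) →
    ‖∑' γ : Fin n → ℕ, a (γ + α) * ∏ j, z j ^ γ j‖ ≤ C / δ ^ (∑ j, α j) := by
  intro n
  induction n with
  | zero =>
    intro a ha α z δ hδ C hC
    have key : ∀ (b : (Fin 0 → ℕ) → ℂ) (ξ : Fin 0 → ℂ),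
        (∑' β : Fin 0 → ℕ, b β * ∏ j, ξ j ^ β j) = b default := by
      intro b ξ
      rw [tsum_eq_single default (fun b' hb' => absurd (Subsingleton.elim b' default) hb')]
      simp
    rw [key]
    have h2 := hC z (fun j => j.elim0)
    rw [key] at h2
    have h3 : (default : Fin 0 → ℕ) + α = default := Subsingleton.elim _ _
    rw [h3]
    simpa using h2
  | succ n ih =>
    intro a ha α z δ hδ C hC
    have hC0 : 0 ≤ C := le_trans (norm_nonneg _)
      (hC z (fun j => ⟨1, by norm_num, by simp [hδ.le]⟩))
    set α' : Fin n → ℕ := Fin.tail α with hα'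
    set z' : Fin n → ℂ := Fin.tail z with hz'
    set E : (ℕ × (Fin n → ℕ)) ≃ (Fin (n+1) → ℕ) := Fin.consEquiv fun _ => ℕ with hE
    have hEapp : ∀ q : ℕ × (Fin n → ℕ), E q = Fin.cons q.1 q.2 := fun q => rfl
    -- norms of cons products
    have hnormprod : ∀ (w : ℂ) (ξ' : Fin n → ℂ) (k : ℕ) (K : Fin n → ℕ),
        ∏ j : Fin (n+1), ‖(Fin.cons w ξ' : Fin (n+1) → ℂ) j‖ ^ ((Fin.cons k K : Fin (n+1) → ℕ) j)
          = ‖w‖ ^ k * ∏ j, ‖ξ' j‖ ^ K j := by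
      intro w ξ' k K
      rw [Fin.prod_univ_succ]
      simp
    -- real master summability
    have hmR : ∀ (κ : ℕ) (θ : Fin n → ℕ) (w : ℂ) (ξ' : Fin n → ℂ),
        Summable fun q : ℕ × (Fin n → ℕ) =>
          ‖a (Fin.cons (q.1 + κ) (q.2 + θ))‖ * (‖w‖ ^ q.1 * ∏ j, ‖ξ' j‖ ^ q.2 j) := by
      intro κ θ w ξ'
      have h1 := shift_summable a ha (Fin.cons κ θ : Fin (n+1) → ℕ) (Fin.cons w ξ' : Fin (n+1) → ℂ)
      have h2 := (E.summable_iff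
        (f := fun γ : Fin (n+1) → ℕ => ‖a (γ + (Fin.cons κ θ : Fin (n+1) → ℕ))‖ * ∏ j, ‖(Fin.cons w ξ' : Fin (n+1) → ℂ) j‖ ^ γ j)).2 h1
      refine h2.congr fun q => ?_
      show ‖a (E q + (Fin.cons κ θ : Fin (n+1) → ℕ))‖ * ∏ j, ‖(Fin.cons w ξ' : Fin (n+1) → ℂ) j‖ ^ (E q) j = _
      rw [hEapp, cons_add_cons, hnormprod]
    -- complex master
    have hm : ∀ (κ : ℕ) (θ : Fin n → ℕ) (w : ℂ) (ξ' : Fin n → ℂ),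
        Summable fun q : ℕ × (Fin n → ℕ) =>
          a (Fin.cons (q.1 + κ) (q.2 + θ)) * (w ^ q.1 * ∏ j, ξ' j ^ q.2 j) := by
      intro κ θ w ξ'
      refine Summable.of_norm ((hmR κ θ w ξ').congr fun q => ?_)
      simp [norm_mul, norm_prod, norm_pow]
    -- swapped real master
    have hmRswap : ∀ (κ : ℕ) (θ : Fin n → ℕ) (w : ℂ) (ξ' : Fin n → ℂ),
        Summable fun q : (Fin n → ℕ) × ℕ =>
          ‖a (Fin.cons (q.2 + κ) (q.1 + θ))‖ * (‖w‖ ^ q.2 * ∏ j, ‖ξ' j‖ ^ q.1 j) := by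
      intro κ θ w ξ'
      exact ((Equiv.prodComm (Fin n → ℕ) ℕ).summable_iff).2 (hmR κ θ w ξ')
    -- slices in γ' for fixed k
    have hsliceG : ∀ (κ : ℕ) (θ : Fin n → ℕ) (w : ℂ) (ξ' : Fin n → ℂ) (k : ℕ),
        Summable fun γ' : Fin n → ℕ =>
          a (Fin.cons (k + κ) (γ' + θ)) * (w ^ k * ∏ j, ξ' j ^ γ' j) := by
      intro κ θ w ξ' k
      have h1 := ((summable_prod_of_nonneg (fun q => by positivity)).1 (hmR κ θ w ξ')).1 k
      refine Summable.of_norm (h1.congr fun γ' => ?_)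
      simp [norm_mul, norm_prod, norm_pow]
    -- slices in k for fixed γ'
    have hsliceK : ∀ (κ : ℕ) (θ : Fin n → ℕ) (w : ℂ) (ξ' : Fin n → ℂ) (γ' : Fin n → ℕ),
        Summable fun k : ℕ =>
          a (Fin.cons (k + κ) (γ' + θ)) * (w ^ k * ∏ j, ξ' j ^ γ' j) := by
      intro κ θ w ξ' γ'
      have h1 := ((summable_prod_of_nonneg (fun q => by positivity)).1 (hmRswap κ θ w ξ')).1 γ'
      refine Summable.of_norm (h1.congr fun k => ?_)
      simp [norm_mul, norm_prod, norm_pow]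
    -- norm slices in k for fixed γ'
    have hsliceKnorm : ∀ (κ : ℕ) (θ : Fin n → ℕ) (w : ℂ) (ξ' : Fin n → ℂ) (γ' : Fin n → ℕ),
        Summable fun k : ℕ =>
          ‖a (Fin.cons (k + κ) (γ' + θ)) * (w ^ k * ∏ j, ξ' j ^ γ' j)‖ := by
      intro κ θ w ξ' γ'
      have h1 := ((summable_prod_of_nonneg (fun q => by positivity)).1 (hmRswap κ θ w ξ')).1 γ'
      refine h1.congr fun k => ?_
      simp [norm_mul, norm_prod, norm_pow]
    set A : ℂ → (Fin n → ℕ) → ℂ := fun w γ' => ∑' k, a (Fin.cons k γ') * w ^ k with hA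
    set c : ℕ → ℂ := fun k =>
      ∑' γ' : Fin n → ℕ, a (Fin.cons k (γ' + α')) * ∏ j, z' j ^ γ' j with hc
    -- Step 1 : rewrite the goal sum
    have hstep1 : (∑' γ : Fin (n+1) → ℕ, a (γ + α) * ∏ j, z j ^ γ j)
        = ∑' k, c (k + α 0) * z 0 ^ k := by
      calc (∑' γ : Fin (n+1) → ℕ, a (γ + α) * ∏ j, z j ^ γ j)
          = ∑' q : ℕ × (Fin n → ℕ),
              a (Fin.cons (q.1 + α 0) (q.2 + α')) * (z 0 ^ q.1 * ∏ j, z' j ^ q.2 j) := by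
            rw [← E.tsum_eq]
            refine tsum_congr fun q => ?_
            rw [hEapp]
            have h2 : (Fin.cons q.1 q.2 : Fin (n+1) → ℕ) + α
                = (Fin.cons (q.1 + α 0) (q.2 + α') : Fin (n+1) → ℕ) := by
              conv_lhs => rw [← Fin.cons_self_tail α]
              rw [cons_add_cons]
            have h3 : ∏ j, z j ^ ((Fin.cons q.1 q.2 : Fin (n+1) → ℕ) j)
                = z 0 ^ q.1 * ∏ j, z' j ^ q.2 j := by
              conv_lhs => rw [← Fin.cons_self_tail z]
              rw [prod_cons_pow]
            rw [h2, h3]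
        _ = ∑' k, ∑' γ' : Fin n → ℕ,
              a (Fin.cons (k + α 0) (γ' + α')) * (z 0 ^ k * ∏ j, z' j ^ γ' j) :=
            Summable.tsum_prod' (hm (α 0) α' (z 0) z') (fun k => hsliceG (α 0) α' (z 0) z' k)
        _ = ∑' k, c (k + α 0) * z 0 ^ k := by
            refine tsum_congr fun k => ?_
            rw [hc, ← tsum_mul_right]
            exact tsum_congr fun γ' => by ring
    -- summability hypothesis for lemA
    have hac : ∀ w : ℂ, Summable fun k => c k * w ^ k := by
      intro w
      have hreal : Summable fun q : ℕ × (Fin n → ℕ) =>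
          ‖a (Fin.cons q.1 (q.2 + α'))‖ * (‖w‖ ^ q.1 * ∏ j, ‖z' j‖ ^ q.2 j) := by
        simpa using hmR 0 α' w z'
      have houter := ((summable_prod_of_nonneg (fun q => by positivity)).1 hreal).2
      have hsliceN : ∀ k, Summable fun γ' : Fin n → ℕ =>
          ‖a (Fin.cons k (γ' + α')) * (w ^ k * ∏ j, z' j ^ γ' j)‖ := by
        intro k
        refine (((summable_prod_of_nonneg (fun q => by positivity)).1 hreal).1 k).congr
          fun γ' => ?_
        simp [norm_mul, norm_prod, norm_pow]
      refine Summable.of_norm (Summable.of_nonneg_of_le (fun k => norm_nonneg _)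
        (fun k => ?_) houter)
      have h1 : c k * w ^ k
          = ∑' γ' : Fin n → ℕ, a (Fin.cons k (γ' + α')) * (w ^ k * ∏ j, z' j ^ γ' j) := by
        rw [hc, ← tsum_mul_right]
        exact tsum_congr fun γ' => by ring
      rw [h1]
      refine (norm_tsum_le_tsum_norm (hsliceN k)).trans (le_of_eq (tsum_congr fun γ' => ?_))
      simp [norm_mul, norm_prod, norm_pow]
    -- bound hypothesis for lemA
    have hCc : ∀ (t : ℝ) (w : ℂ), t ∈ Set.Icc (0:ℝ) 1 → dist w (t • z 0) ≤ δ →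
        ‖∑' k, c k * w ^ k‖ ≤ C / δ ^ (∑ j, α' j) := by
      intro t w ht hw
      have hm1 : Summable fun q : ℕ × (Fin n → ℕ) =>
          a (Fin.cons q.1 (q.2 + α')) * (w ^ q.1 * ∏ j, z' j ^ q.2 j) := by
        simpa using hm 0 α' w z'
      have hsg : ∀ k, Summable fun γ' : Fin n → ℕ =>
          a (Fin.cons k (γ' + α')) * (w ^ k * ∏ j, z' j ^ γ' j) := by
        intro k; simpa using hsliceG 0 α' w z' k
      have hsk : ∀ γ' : Fin n → ℕ, Summable fun k =>
          a (Fin.cons k (γ' + α')) * (w ^ k * ∏ j, z' j ^ γ' j) := by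
        intro γ'; simpa using hsliceK 0 α' w z' γ'
      have hm1swap : Summable fun q : (Fin n → ℕ) × ℕ =>
          a (Fin.cons q.2 (q.1 + α')) * (w ^ q.2 * ∏ j, z' j ^ q.1 j) :=
        ((Equiv.prodComm (Fin n → ℕ) ℕ).summable_iff).2 hm1
      have hswap : (∑' k, c k * w ^ k)
          = ∑' γ' : Fin n → ℕ, A w (γ' + α') * ∏ j, z' j ^ γ' j := by
        calc (∑' k, c k * w ^ k)
            = ∑' k, ∑' γ' : Fin n → ℕ,
                a (Fin.cons k (γ' + α')) * (w ^ k * ∏ j, z' j ^ γ' j) := by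
              refine tsum_congr fun k => ?_
              rw [hc, ← tsum_mul_right]
              exact tsum_congr fun γ' => by ring
          _ = ∑' q : ℕ × (Fin n → ℕ),
                a (Fin.cons q.1 (q.2 + α')) * (w ^ q.1 * ∏ j, z' j ^ q.2 j) :=
              (Summable.tsum_prod' hm1 hsg).symm
          _ = ∑' q : (Fin n → ℕ) × ℕ,
                a (Fin.cons q.2 (q.1 + α')) * (w ^ q.2 * ∏ j, z' j ^ q.1 j) :=
              ((Equiv.prodComm (Fin n → ℕ) ℕ).tsum_eq (fun q : ℕ × (Fin n → ℕ) =>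
                a (Fin.cons q.1 (q.2 + α')) * (w ^ q.1 * ∏ j, z' j ^ q.2 j))).symm
          _ = ∑' γ' : Fin n → ℕ, ∑' k,
                a (Fin.cons k (γ' + α')) * (w ^ k * ∏ j, z' j ^ γ' j) :=
              Summable.tsum_prod' hm1swap hsk
          _ = ∑' γ' : Fin n → ℕ, A w (γ' + α') * ∏ j, z' j ^ γ' j := by
              refine tsum_congr fun γ' => ?_
              rw [hA, ← tsum_mul_right]
              exact tsum_congr fun k => by ring
      rw [hswap]
      refine ih (A w) ?_ α' z' δ hδ C ?_
      · -- summability of the A-family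
        intro ζ'
        have hreal1 : Summable fun q : (Fin n → ℕ) × ℕ =>
            ‖a (Fin.cons q.2 q.1)‖ * (‖w‖ ^ q.2 * ∏ j, ‖ζ' j‖ ^ q.1 j) := by
          simpa using hmRswap 0 0 w ζ'
        have houter1 := ((summable_prod_of_nonneg (fun q => by positivity)).1 hreal1).2
        have hsliceN1 : ∀ γ' : Fin n → ℕ, Summable fun k => ‖a (Fin.cons k γ') * w ^ k‖ := by
          intro γ'
          have h2 : Summable fun q : (Fin n → ℕ) × ℕ =>
              ‖a (Fin.cons q.2 q.1)‖ * (‖w‖ ^ q.2 * ∏ j, ‖(1:ℂ)‖ ^ q.1 j) := by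
            simpa using hmRswap 0 0 w (fun _ => (1:ℂ))
          refine (((summable_prod_of_nonneg (fun q => by positivity)).1 h2).1 γ').congr
            fun k => ?_
          simp [norm_mul, norm_pow]
        refine Summable.of_nonneg_of_le (fun γ' => by positivity) (fun γ' => ?_) houter1
        have h3 : ‖A w γ'‖ ≤ ∑' k, ‖a (Fin.cons k γ') * w ^ k‖ :=
          norm_tsum_le_tsum_norm (hsliceN1 γ')
        calc ‖A w γ'‖ * ∏ j, ‖ζ' j‖ ^ γ' j
            ≤ (∑' k, ‖a (Fin.cons k γ') * w ^ k‖) * ∏ j, ‖ζ' j‖ ^ γ' j :=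
              mul_le_mul_of_nonneg_right h3 (by positivity)
          _ = ∑' k, ‖a (Fin.cons k γ')‖ * (‖w‖ ^ k * ∏ j, ‖ζ' j‖ ^ γ' j) := by
              rw [← tsum_mul_right]
              refine tsum_congr fun k => ?_
              rw [norm_mul, norm_pow]
              ring
      · -- the sup bound via hC
        intro ξ' hξ'
        have hm2 : Summable fun q : (Fin n → ℕ) × ℕ =>
            a (Fin.cons q.2 q.1) * (w ^ q.2 * ∏ j, ξ' j ^ q.1 j) := by
          have := ((Equiv.prodComm (Fin n → ℕ) ℕ).summable_iff).2 (hm 0 0 w ξ')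
          simpa [Function.comp_def] using this
        have hsk2 : ∀ γ' : Fin n → ℕ,
            Summable fun k => a (Fin.cons k γ') * (w ^ k * ∏ j, ξ' j ^ γ' j) := by
          intro γ'; simpa using hsliceK 0 0 w ξ' γ'
        have hfull : (∑' γ' : Fin n → ℕ, A w γ' * ∏ j, ξ' j ^ γ' j)
            = ∑' β : Fin (n+1) → ℕ, a β * ∏ j, (Fin.cons w ξ' : Fin (n+1) → ℂ) j ^ β j := by
          calc (∑' γ' : Fin n → ℕ, A w γ' * ∏ j, ξ' j ^ γ' j)
              = ∑' γ' : Fin n → ℕ, ∑' k, a (Fin.cons k γ') * (w ^ k * ∏ j, ξ' j ^ γ' j) := by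
                refine tsum_congr fun γ' => ?_
                rw [hA, ← tsum_mul_right]
                exact tsum_congr fun k => by ring
            _ = ∑' q : (Fin n → ℕ) × ℕ, a (Fin.cons q.2 q.1) * (w ^ q.2 * ∏ j, ξ' j ^ q.1 j) :=
                (Summable.tsum_prod' hm2 hsk2).symm
            _ = ∑' q : ℕ × (Fin n → ℕ), a (Fin.cons q.1 q.2) * (w ^ q.1 * ∏ j, ξ' j ^ q.2 j) :=
                (Equiv.prodComm (Fin n → ℕ) ℕ).tsum_eq (fun q : ℕ × (Fin n → ℕ) =>
                  a (Fin.cons q.1 q.2) * (w ^ q.1 * ∏ j, ξ' j ^ q.2 j))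
            _ = ∑' β : Fin (n+1) → ℕ, a β * ∏ j, (Fin.cons w ξ' : Fin (n+1) → ℂ) j ^ β j := by
                rw [← E.tsum_eq]
                refine tsum_congr fun q => ?_
                rw [hEapp, prod_cons_pow]
        rw [hfull]
        refine hC (Fin.cons w ξ') ?_
        intro j
        refine Fin.cases ?_ (fun j => ?_) j
        · exact ⟨t, ht, by simpa using hw⟩
        · simpa [Fin.tail, hz'] using hξ' j
    -- conclude with lemA
    have hlemA := lemA c hac (α 0) (z 0) δ hδ (C / δ ^ (∑ j, α' j)) hCc
    rw [hstep1]
    refine hlemA.trans (le_of_eq ?_)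
    rw [div_div, ← pow_add, Fin.sum_univ_succ]
    congr 2
    exact Nat.add_comm _ _

/-- `F` is entire with (everywhere absolutely convergent) power series expansion at `0` with
coefficients `a`. -/
def IsEntireWithCoeffs {n : ℕ} (a : (Fin n → ℕ) → ℂ) (F : (Fin n → ℂ) → ℂ) : Prop :=
  ∀ z : Fin n → ℂ, HasSum (fun β : Fin n → ℕ => a β * ∏ j, z j ^ β j) (F z)

/-- the Cauchy estimate for the unique entire function `g_α` such that no monomial
of the power series of `F − g_α z^α` is divisible by `z^α` (i.e. `b γ = a (γ + α)`):
`|g_α(z)| ≤ (2ⁿ/δ^{|α|}) ∏_j ((|z_j|+δ)/δ) · sup {|F(ξ)| : |Re ξ_j| ≤ |Re z_j|+δ,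
|Im ξ_j| ≤ |Im z_j|+δ}`. -/
theorem statement4 {n : ℕ} (α : Fin n → ℕ) (F g : (Fin n → ℂ) → ℂ)
    (a b : (Fin n → ℕ) → ℂ) (hF : IsEntireWithCoeffs a F) (hg : IsEntireWithCoeffs b g)
    (hdiv : ∀ β : Fin n → ℕ, α ≤ β → a β = b (β - α)) :
    ∀ δ : ℝ, 0 < δ → ∀ z : Fin n → ℂ,
      ‖g z‖ ≤ (2 ^ n / δ ^ (∑ j, α j)) * (∏ j, (‖z j‖ + δ) / δ) *
        sSup ((fun ξ => ‖F ξ‖) ''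
          {ξ : Fin n → ℂ | ∀ j, |(ξ j).re| ≤ |(z j).re| + δ ∧ |(ξ j).im| ≤ |(z j).im| + δ}) := by
  intro δ hδ z
  have hba : ∀ γ : Fin n → ℕ, b γ = a (γ + α) := by
    intro γ
    have h1 := hdiv (γ + α) (fun j => Nat.le_add_left _ _)
    have h2 : γ + α - α = γ := by
      funext j
      simp [Pi.sub_apply, Pi.add_apply]
    rw [h2] at h1
    exact h1.symm
  -- absolute summability
  have ha : ∀ ξ : Fin n → ℂ, Summable fun β : Fin n → ℕ => ‖a β‖ * ∏ j, ‖ξ j‖ ^ β j := by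
    intro ξ
    have h1 := (hF (fun j => ((‖ξ j‖ : ℝ) : ℂ))).summable
    have h2 := summable_norm_iff.2 h1
    refine h2.congr fun β => ?_
    simp [norm_mul, norm_prod, norm_pow]
  set S : Set (Fin n → ℂ) :=
    {ξ : Fin n → ℂ | ∀ j, |(ξ j).re| ≤ |(z j).re| + δ ∧ |(ξ j).im| ≤ |(z j).im| + δ} with hS
  set M : ℝ := sSup ((fun ξ => ‖F ξ‖) '' S) with hM
  -- bound on the box
  set r : Fin n → ℝ := fun j => |(z j).re| + |(z j).im| + 2 * δ with hr
  have hr0 : ∀ j, 0 ≤ r j := fun j => by positivity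
  have hbox_le : ∀ ξ ∈ S, ∀ j, ‖ξ j‖ ≤ r j := by
    intro ξ hξ j
    calc ‖ξ j‖ ≤ |(ξ j).re| + |(ξ j).im| := Complex.norm_le_abs_re_add_abs_im _
      _ ≤ (|(z j).re| + δ) + (|(z j).im| + δ) := add_le_add (hξ j).1 (hξ j).2
      _ = r j := by rw [hr]; ring
  have hmaj : Summable fun β : Fin n → ℕ => ‖a β‖ * ∏ j, r j ^ β j := by
    have := ha (fun j => ((r j : ℝ) : ℂ))
    refine this.congr fun β => ?_
    congr 1
    refine Finset.prod_congr rfl fun j _ => ?_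
    rw [Complex.norm_real, Real.norm_eq_abs, abs_of_nonneg (hr0 j)]
  have hbdd : BddAbove ((fun ξ => ‖F ξ‖) '' S) := by
    refine ⟨∑' β : Fin n → ℕ, ‖a β‖ * ∏ j, r j ^ β j, ?_⟩
    rintro y ⟨ξ, hξ, rfl⟩
    have h1 : F ξ = ∑' β : Fin n → ℕ, a β * ∏ j, ξ j ^ β j := (hF ξ).tsum_eq.symm
    show ‖F ξ‖ ≤ _
    rw [h1]
    have h2 : Summable fun β : Fin n → ℕ => ‖a β * ∏ j, ξ j ^ β j‖ := by
      refine (ha ξ).congr fun β => ?_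
      simp [norm_mul, norm_prod, norm_pow]
    refine (norm_tsum_le_tsum_norm h2).trans ?_
    refine Summable.tsum_le_tsum (fun β => ?_) h2 hmaj
    have h3 : ‖a β * ∏ j, ξ j ^ β j‖ = ‖a β‖ * ∏ j, ‖ξ j‖ ^ β j := by
      simp [norm_mul, norm_prod, norm_pow]
    rw [h3]
    refine mul_le_mul_of_nonneg_left ?_ (norm_nonneg _)
    exact Finset.prod_le_prod (fun j _ => by positivity)
      (fun j _ => pow_le_pow_left₀ (norm_nonneg _) (hbox_le ξ hξ j) _)
  have hM0 : 0 ≤ M := by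
    have hzS : z ∈ S := fun j => ⟨by linarith [abs_nonneg (z j).re, hδ],
      by linarith [abs_nonneg (z j).im, hδ]⟩
    exact le_trans (norm_nonneg (F z)) (le_csSup hbdd ⟨z, hzS, rfl⟩)
  -- sausage points are in the box
  have hsausage : ∀ ξ : Fin n → ℂ,
      (∀ j, ∃ t : ℝ, t ∈ Set.Icc (0:ℝ) 1 ∧ dist (ξ j) (t • z j) ≤ δ) → ξ ∈ S := by
    intro ξ hξ j
    obtain ⟨t, ht, hd⟩ := hξ j
    have hre : |(ξ j).re - t * (z j).re| ≤ δ := by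
      have h1 : |(ξ j - t • z j).re| ≤ ‖ξ j - t • z j‖ := Complex.abs_re_le_norm _
      rw [dist_eq_norm] at hd
      have h2 : (ξ j - t • z j).re = (ξ j).re - t * (z j).re := by
        simp [Complex.sub_re, Complex.smul_re]
      rw [h2] at h1
      linarith
    have him : |(ξ j).im - t * (z j).im| ≤ δ := by
      have h1 : |(ξ j - t • z j).im| ≤ ‖ξ j - t • z j‖ := Complex.abs_im_le_norm _
      rw [dist_eq_norm] at hd
      have h2 : (ξ j - t • z j).im = (ξ j).im - t * (z j).im := by
        simp [Complex.sub_im, Complex.smul_im]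
      rw [h2] at h1
      linarith
    constructor
    · calc |(ξ j).re| ≤ |(ξ j).re - t * (z j).re| + |t * (z j).re| := by
            have := abs_sub_abs_le_abs_sub ((ξ j).re) (t * (z j).re)
            have := abs_add_le ((ξ j).re - t * (z j).re) (t * (z j).re)
            calc |(ξ j).re| = |((ξ j).re - t * (z j).re) + t * (z j).re| := by ring_nf
              _ ≤ _ := abs_add_le _ _
        _ ≤ δ + |(z j).re| := by
            refine add_le_add hre ?_
            rw [abs_mul, abs_of_nonneg ht.1]
            calc t * |(z j).re| ≤ 1 * |(z j).re| :=
                  mul_le_mul_of_nonneg_right ht.2 (abs_nonneg _)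
              _ = |(z j).re| := one_mul _
        _ = |(z j).re| + δ := by ring
    · calc |(ξ j).im| ≤ |(ξ j).im - t * (z j).im| + |t * (z j).im| := by
            calc |(ξ j).im| = |((ξ j).im - t * (z j).im) + t * (z j).im| := by ring_nf
              _ ≤ _ := abs_add_le _ _
        _ ≤ δ + |(z j).im| := by
            refine add_le_add him ?_
            rw [abs_mul, abs_of_nonneg ht.1]
            calc t * |(z j).im| ≤ 1 * |(z j).im| :=
                  mul_le_mul_of_nonneg_right ht.2 (abs_nonneg _)
              _ = |(z j).im| := one_mul _
        _ = |(z j).im| + δ := by ring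
  -- apply lemB
  have hkey := lemB n a ha α z δ hδ M (fun ξ hξ => by
    have h1 : (∑' β : Fin n → ℕ, a β * ∏ j, ξ j ^ β j) = F ξ := (hF ξ).tsum_eq
    rw [h1]
    exact le_csSup hbdd ⟨ξ, hsausage ξ hξ, rfl⟩)
  have hgz : g z = ∑' γ : Fin n → ℕ, a (γ + α) * ∏ j, z j ^ γ j := by
    rw [← (hg z).tsum_eq]
    exact tsum_congr fun γ => by rw [hba γ]
  rw [hgz]
  refine hkey.trans ?_
  -- M / δ^s ≤ (2^n/δ^s) * ∏ ((‖z j‖+δ)/δ) * M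
  have hP1 : (1:ℝ) ≤ ∏ j, (‖z j‖ + δ) / δ := by
    have h1 : ∏ _j : Fin n, (1:ℝ) ≤ ∏ j, (‖z j‖ + δ) / δ := by
      refine Finset.prod_le_prod (fun j _ => zero_le_one) (fun j _ => ?_)
      rw [le_div_iff₀ hδ]
      nlinarith [norm_nonneg (z j)]
    simpa using h1
  have h2n : (1:ℝ) ≤ 2 ^ n := by
    have h22 : (1:ℝ) ≤ 2 := by norm_num
    exact one_le_pow₀ h22
  have hP0 : (0:ℝ) ≤ ∏ j, (‖z j‖ + δ) / δ := zero_le_one.trans hP1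
  calc M / δ ^ (∑ j, α j) = 1 / δ ^ (∑ j, α j) * 1 * M := by ring
    _ ≤ 2 ^ n / δ ^ (∑ j, α j) * (∏ j, (‖z j‖ + δ) / δ) * M := by
        refine mul_le_mul (mul_le_mul ?_ hP1 zero_le_one ?_) le_rfl hM0 ?_
        · gcongr
        · positivity
        · exact mul_nonneg (by positivity) hP0
end

section
/- Let F be an entire function on ℂᵐ × ℂⁿ and α ∈ ℕᵐ such that no term of the power series expansion of F at 0 contains a monomial divisible by w₁^{α'} for any α' ≥ α with α' ≠ α. Then for every β ∈ ℕⁿ there exists a unique entire function g on ℂⁿ (depending only on the second variable) such that no term of the power series expansion of F(w₁,w₂) − g(w₂)·w₁^α·w₂^β contains a monomial divisible by w₁^α·w₂^β. -/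
/-- `F` is entire on `ℂᵐ × ℂⁿ` with (everywhere absolutely convergent) power series expansion
at `0` with coefficients `a`, indexed by pairs of multi-indices. -/
def IsEntireWithCoeffs2 {m n : ℕ} (a : (Fin m → ℕ) × (Fin n → ℕ) → ℂ)
    (F : (Fin m → ℂ) × (Fin n → ℂ) → ℂ) : Prop :=
  ∀ w : (Fin m → ℂ) × (Fin n → ℂ),
    HasSum (fun γ : (Fin m → ℕ) × (Fin n → ℕ) =>
      a γ * (∏ j, w.1 j ^ γ.1 j) * ∏ j, w.2 j ^ γ.2 j) (F w)

/-- if no term of the power series of `F` contains a monomial divisible by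
`w₁^{α'}` for some `α' ≥ α`, `α' ≠ α`, then for every `β` there is a unique entire function `g`
on `ℂⁿ` (a function of the second variable only) such that no term of the power series of
`F − g(w₂)·w₁^α·w₂^β` contains a monomial divisible by `w₁^α w₂^β`; i.e. for all
`γ = (γ₁,γ₂) ≥ (α,β)` the coefficient `a γ` equals the corresponding coefficient of
`g(w₂) w₁^α w₂^β`. -/
theorem statement5 {m n : ℕ} (α : Fin m → ℕ) (F : (Fin m → ℂ) × (Fin n → ℂ) → ℂ)
    (a : (Fin m → ℕ) × (Fin n → ℕ) → ℂ) (hF : IsEntireWithCoeffs2 a F)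
    (hα : ∀ γ : (Fin m → ℕ) × (Fin n → ℕ), α ≤ γ.1 → γ.1 ≠ α → a γ = 0) :
    ∀ β : Fin n → ℕ, ∃! g : (Fin n → ℂ) → ℂ, ∃ c : (Fin n → ℕ) → ℂ,
      (∀ z : Fin n → ℂ, HasSum (fun δ : Fin n → ℕ => c δ * ∏ j, z j ^ δ j) (g z)) ∧
      ∀ γ : (Fin m → ℕ) × (Fin n → ℕ), α ≤ γ.1 → β ≤ γ.2 →
        a γ = if γ.1 = α then c (γ.2 - β) else 0 := by
  intro β
  classical
  set c : (Fin n → ℕ) → ℂ := fun δ => a (α, δ + β) with hc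
  have key : ∀ z : Fin n → ℂ, Summable (fun δ : Fin n → ℕ => c δ * ∏ j, z j ^ δ j) := by
    intro z
    set z' : Fin n → ℂ := fun j => ((max ‖z j‖ 1 : ℝ) : ℂ) with hz'
    have h1 := (hF (fun _ => 1, z')).summable
    have hinj : Function.Injective
        (fun δ : Fin n → ℕ => ((α, δ + β) : (Fin m → ℕ) × (Fin n → ℕ))) := by
      intro δ₁ δ₂ h
      have := congrArg Prod.snd h
      simpa using add_left_injective β this
    have h2 : Summable (fun δ : Fin n → ℕ =>
        a (α, δ + β) * (∏ j, (1:ℂ) ^ α j) * ∏ j, z' j ^ (δ + β) j) :=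
      h1.comp_injective hinj
    have h3 : Summable (fun δ : Fin n → ℕ =>
        ‖a (α, δ + β) * (∏ j, (1:ℂ) ^ α j) * ∏ j, z' j ^ (δ + β) j‖) :=
      summable_norm_iff.mpr h2
    refine Summable.of_norm_bounded h3 ?_
    intro δ
    simp only [norm_mul, norm_prod, norm_pow, norm_one, one_pow, Finset.prod_const_one,
      mul_one, hc, hz', Pi.add_apply]
    refine mul_le_mul_of_nonneg_left ?_ (norm_nonneg _)
    refine Finset.prod_le_prod (fun j _ => by positivity) (fun j _ => ?_)
    have h1' : (1:ℝ) ≤ ‖((max ‖z j‖ 1 : ℝ) : ℂ)‖ := by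
      rw [Complex.norm_real]
      exact le_trans (le_max_right _ _) (le_abs_self _)
    have h2' : ‖z j‖ ≤ ‖((max ‖z j‖ 1 : ℝ) : ℂ)‖ := by
      rw [Complex.norm_real]
      exact le_trans (le_max_left _ _) (le_abs_self _)
    calc ‖z j‖ ^ δ j ≤ ‖((max ‖z j‖ 1 : ℝ) : ℂ)‖ ^ δ j :=
          pow_le_pow_left₀ (norm_nonneg _) h2' _
      _ ≤ ‖((max ‖z j‖ 1 : ℝ) : ℂ)‖ ^ (δ j + β j) :=
          pow_le_pow_right₀ h1' (Nat.le_add_right _ _)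
  refine ⟨fun z => ∑' δ, c δ * ∏ j, z j ^ δ j, ⟨c, fun z => (key z).hasSum, ?_⟩, ?_⟩
  · intro γ hγ1 hγ2
    by_cases h : γ.1 = α
    · simp only [h, if_true, hc]
      have : γ.2 - β + β = γ.2 := by
        funext j
        exact Nat.sub_add_cancel (hγ2 j)
      rw [this, ← h]
    · simp only [h, if_false]
      exact hα γ hγ1 h
  · rintro g' ⟨c', hs, hcoef⟩
    have hcc : c' = c := by
      funext δ
      have h := hcoef (α, δ + β) le_rfl (fun j => Nat.le_add_left _ _)
      simp only [if_true] at h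
      have hsub : δ + β - β = δ := by
        funext j; simp
      rw [hsub] at h
      exact h.symm
    funext z
    rw [hcc] at hs
    exact ((hs z).tsum_eq).symm
end
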